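/- Let ξ be a real quadratic integer with purely periodic simple continued fraction expansion of period length L, satisfying ξ² − tξ − u = 0 with 0 > ξ̄ > −1. If p/q is the convergent of ξ formed from nL terms (n ≥ 1), then p/q is Pellian for ξ: q > 0, p/q > t/2, and p² − tpq − uq² = ±1. -/

import Mathlib

open GenContFract

private noncomputable def FF : ℝ → ℝ := fun x => (Int.fract x)⁻¹

private lemma fract_ne_zero_of_irr {v : ℝ} (hv : ∀ q : ℚ, v ≠ (q : ℝ)) :
    Int.fract v ≠ 0 := by
  intro h
  have hfr : v - (⌊v⌋ : ℝ) = 0 := h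
  exact hv (⌊v⌋ : ℚ) (by push_cast; linarith)

private lemma irr_FF {v : ℝ} (hv : ∀ q : ℚ, v ≠ (q : ℝ)) :
    ∀ q : ℚ, FF v ≠ (q : ℝ) := by
  intro q hq
  have h1 : Int.fract v = ((q : ℝ))⁻¹ := by rw [← hq]; simp [FF]
  have hfr : v - (⌊v⌋ : ℝ) = ((q : ℝ))⁻¹ := h1
  apply hv ((⌊v⌋ : ℚ) + q⁻¹)
  push_cast
  linarith

private lemma irr_iter (k : ℕ) : ∀ v : ℝ, (∀ q : ℚ, v ≠ (q : ℝ)) →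
    ∀ q : ℚ, FF^[k] v ≠ (q : ℝ) := by
  induction k with
  | zero => intro v hv; simpa using hv
  | succ k ih =>
    intro v hv
    rw [Function.iterate_succ_apply]
    exact ih (FF v) (irr_FF hv)

private lemma stream_iter (k : ℕ) : ∀ v : ℝ, (∀ q : ℚ, v ≠ (q : ℝ)) →
    IntFractPair.stream v k = some ⟨⌊FF^[k] v⌋, Int.fract (FF^[k] v)⟩ := by
  induction k with
  | zero =>
    intro v hv
    simp [IntFractPair.stream_zero, IntFractPair.of]
  | succ k ih =>
    intro v hv
    rw [IntFractPair.stream_succ (fract_ne_zero_of_irr hv), Function.iterate_succ_apply]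
    exact ih (FF v) (irr_FF hv)

private lemma s_shift (k : ℕ) : ∀ (v : ℝ) (m : ℕ),
    (GenContFract.of v).s.get? (k + m) = (GenContFract.of (FF^[k] v)).s.get? m := by
  induction k with
  | zero => intro v m; simp
  | succ k ih =>
    intro v m
    have : k + 1 + m = (k + m) + 1 := by omega
    rw [this, of_s_succ, ih ((Int.fract v)⁻¹) m, Function.iterate_succ_apply]
    rfl

/-- Let `ξ` be a real quadratic integer satisfying `ξ² − tξ − u = 0` with `0 > ξ̄ > −1`
(`ξ̄ = t − ξ`), whose simple continued fraction expansion `[c₀; c₁, c₂, …]` is purely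
periodic with period length `L` (i.e. `c_{i+L} = c_i` for all `i ≥ 0`). If `p/q` is the
convergent of `ξ` formed from `nL` terms (`n ≥ 1`), then `p/q` is Pellian for `ξ`:
`q > 0`, `p/q > t/2`, and `p² − tpq − uq² = ±1`. -/
theorem stmt18 (t u : ℤ) (ξ : ℝ) (hξ : ξ ^ 2 - (t : ℝ) * ξ - (u : ℝ) = 0)
    (hconj : -1 < (t : ℝ) - ξ ∧ (t : ℝ) - ξ < 0)
    (L : ℕ) (hL : 0 < L)
    (hper : ∀ i : ℕ, (GenContFract.of ξ).s.get? (i + L) = (GenContFract.of ξ).s.get? i)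
    (hper0 : ∃ pr : GenContFract.Pair ℝ,
      (GenContFract.of ξ).s.get? (L - 1) = some pr ∧ pr.b = (GenContFract.of ξ).h)
    (n : ℕ) (hn : 1 ≤ n) (p q : ℤ)
    (hp : (p : ℝ) = (GenContFract.of ξ).nums (n * L - 1))
    (hq : (q : ℝ) = (GenContFract.of ξ).dens (n * L - 1)) :
    0 < q ∧ (p : ℝ) / (q : ℝ) > (t : ℝ) / 2 ∧
      (p ^ 2 - t * p * q - u * q ^ 2 = 1 ∨ p ^ 2 - t * p * q - u * q ^ 2 = -1) := by
  obtain ⟨hc1, hc2⟩ := hconj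
  obtain ⟨pr, hpr, hprb⟩ := hper0
  -- iterated periodicity
  have h1 : ∀ j i : ℕ, (GenContFract.of ξ).s.get? (i + j * L) = (GenContFract.of ξ).s.get? i := by
    intro j
    induction j with
    | zero => simp
    | succ j ih =>
      intro i
      have e : i + (j + 1) * L = (i + j * L) + L := by ring
      rw [e, hper, ih]
  -- non-termination
  have h2 : ∀ m, ¬ (GenContFract.of ξ).TerminatedAt m := by
    intro m hm
    have hbig : (GenContFract.of ξ).s.get? (L - 1 + (m + 1) * L) = some pr := by
      rw [h1]; exact hpr
    have hle : m ≤ L - 1 + (m + 1) * L := by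
      have := Nat.le_mul_of_pos_right (m + 1) hL
      omega
    have hterm := GenContFract.terminated_stable hle hm
    rw [GenContFract.terminatedAt_iff_s_none] at hterm
    rw [hterm] at hbig
    cases hbig
  -- irrationality
  have h3 : ∀ qq : ℚ, ξ ≠ (qq : ℝ) := by
    intro qq hqq
    obtain ⟨m, hm⟩ := (GenContFract.terminates_iff_rat ξ).mpr ⟨qq, hqq⟩
    exact h2 m hm
  have hξ2 : ξ ^ 2 = (t : ℝ) * ξ + (u : ℝ) := by linarith
  have htlt : (t : ℝ) < ξ := by linarith
  have hltt : ξ < (t : ℝ) + 1 := by linarith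
  have hfloor : ⌊ξ⌋ = t := by
    rw [Int.floor_eq_iff]
    exact ⟨le_of_lt htlt, by push_cast; linarith⟩
  have hh : (GenContFract.of ξ).h = (t : ℝ) := by
    rw [of_h_eq_floor, hfloor]
  have hprb1 : (1 : ℝ) ≤ pr.b :=
    of_one_le_get?_partDen (partDen_eq_s_b hpr)
  have ht1R : (1 : ℝ) ≤ (t : ℝ) := by rw [← hh, ← hprb]; exact hprb1
  have ht1 : (1 : ℤ) ≤ t := by exact_mod_cast ht1R
  -- continuants inequality
  have h7 : ∀ k : ℕ,
      (0 ≤ ((GenContFract.of ξ).contsAux k).b ∧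
        (t : ℝ) * ((GenContFract.of ξ).contsAux k).b ≤ ((GenContFract.of ξ).contsAux k).a) ∧
      (0 ≤ ((GenContFract.of ξ).contsAux (k + 1)).b ∧
        (t : ℝ) * ((GenContFract.of ξ).contsAux (k + 1)).b ≤
          ((GenContFract.of ξ).contsAux (k + 1)).a) := by
    intro k
    induction k with
    | zero =>
      constructor
      · constructor <;> simp [GenContFract.contsAux]
      · constructor <;> simp [GenContFract.contsAux, hh, hfloor]
    | succ k ih =>
      obtain ⟨⟨ib0, ia0⟩, ⟨ib1, ia1⟩⟩ := ih
      refine ⟨⟨ib1, ia1⟩, ?_⟩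
      obtain ⟨gp, hgp⟩ := Option.ne_none_iff_exists'.mp (h2 k)
      have ha : gp.a = 1 := of_partNum_eq_one (partNum_eq_s_a hgp)
      have hb : (1 : ℝ) ≤ gp.b := of_one_le_get?_partDen (partDen_eq_s_b hgp)
      have hb0 : (0 : ℝ) ≤ gp.b := le_trans zero_le_one hb
      have hrec := contsAux_recurrence hgp rfl rfl
      rw [hrec, ha]
      dsimp only
      constructor
      · nlinarith [mul_nonneg hb0 ib1]
      · nlinarith [mul_le_mul_of_nonneg_left ia1 hb0]
  have hNpos : 0 < n * L := Nat.mul_pos hn hL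
  have hN1 : n * L - 1 + 1 = n * L := Nat.succ_pred_eq_of_pos hNpos
  have hpA : (p : ℝ) = ((GenContFract.of ξ).contsAux (n * L)).a := by
    rw [hp, num_eq_conts_a, nth_cont_eq_succ_nth_contAux, hN1]
  have hqB : (q : ℝ) = ((GenContFract.of ξ).contsAux (n * L)).b := by
    rw [hq, den_eq_conts_b, nth_cont_eq_succ_nth_contAux, hN1]
  -- q ≥ 1
  have hq1 : (1 : ℝ) ≤ (q : ℝ) := by
    rw [hq]
    have hfib := succ_nth_fib_le_of_nth_den (v := ξ) (n := n * L - 1) (Or.inr (h2 _))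
    rw [hN1] at hfib
    have h1fib : (1 : ℕ) ≤ Nat.fib (n * L) := Nat.fib_pos.mpr hNpos
    calc (1 : ℝ) ≤ (Nat.fib (n * L) : ℝ) := by exact_mod_cast h1fib
      _ ≤ _ := hfib
  have hq0 : 0 < q := by
    have : (1 : ℤ) ≤ q := by exact_mod_cast hq1
    omega
  have hqR : (0 : ℝ) < (q : ℝ) := by linarith
  -- p/q > t/2
  have hpq : (t : ℝ) * (q : ℝ) ≤ (p : ℝ) := by
    rw [hpA, hqB]; exact (h7 (n * L)).1.2
  have hmid : (p : ℝ) / (q : ℝ) > (t : ℝ) / 2 := by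
    have h4 : (t : ℝ) ≤ (p : ℝ) / (q : ℝ) := (le_div_iff₀ hqR).mpr hpq
    linarith
  -- the complete quotient after n*L steps equals ξ
  have hstream : ∀ k, IntFractPair.stream ξ k =
      some ⟨⌊FF^[k] ξ⌋, Int.fract (FF^[k] ξ)⟩ := fun k => stream_iter k ξ h3
  have hirr : ∀ k, ∀ qq : ℚ, FF^[k] ξ ≠ (qq : ℝ) := fun k => irr_iter k ξ h3
  have hsw : ∀ m, (GenContFract.of (FF^[n * L] ξ)).s.get? m = (GenContFract.of ξ).s.get? m := by
    intro m
    have e1 := s_shift (n * L) ξ m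
    have e2 := h1 n m
    rw [← e1, Nat.add_comm]
    exact e2
  have hsNL : (GenContFract.of ξ).s.get? (n * L - 1) = some ⟨1, (⌊FF^[n * L] ξ⌋ : ℝ)⟩ := by
    have hst : IntFractPair.stream ξ (n * L - 1 + 1) =
        some ⟨⌊FF^[n * L] ξ⌋, Int.fract (FF^[n * L] ξ)⟩ := by
      rw [hN1]; exact hstream (n * L)
    exact get?_of_eq_some_of_succ_get?_intFractPair_stream hst
  have hidx : n * L - 1 = L - 1 + (n - 1) * L := by
    obtain ⟨m, rfl⟩ : ∃ m, n = m + 1 := ⟨n - 1, by omega⟩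
    have e : (m + 1) * L = m * L + L := Nat.succ_mul m L
    simp only [Nat.add_sub_cancel]
    omega
  have hprEq : (⟨1, (⌊FF^[n * L] ξ⌋ : ℝ)⟩ : GenContFract.Pair ℝ) = pr := by
    have := hsNL
    rw [hidx, h1 (n - 1) (L - 1), hpr] at this
    exact (Option.some.inj this).symm
  have hhw : (GenContFract.of (FF^[n * L] ξ)).h = (GenContFract.of ξ).h := by
    rw [of_h_eq_floor, ← hprb, ← hprEq]
  have hofeq : GenContFract.of (FF^[n * L] ξ) = GenContFract.of ξ := by
    exact GenContFract.ext hhw (Stream'.Seq.ext hsw)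
  have hwξ : FF^[n * L] ξ = ξ := by
    have t1 := of_convergence (FF^[n * L] ξ) (K := ℝ)
    rw [hofeq] at t1
    exact tendsto_nhds_unique t1 (of_convergence ξ)
  -- correctness
  have hcor := compExactValue_correctness_of_stream_eq_some (hstream (n * L - 1))
  have hfr0 : Int.fract (FF^[n * L - 1] ξ) ≠ 0 := fract_ne_zero_of_irr (hirr _)
  have hfrinv : (Int.fract (FF^[n * L - 1] ξ))⁻¹ = ξ := by
    have e : FF^[n * L - 1 + 1] ξ = FF (FF^[n * L - 1] ξ) :=
      Function.iterate_succ_apply' FF _ ξ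
    rw [hN1] at e
    calc (Int.fract (FF^[n * L - 1] ξ))⁻¹ = FF (FF^[n * L - 1] ξ) := rfl
      _ = FF^[n * L] ξ := e.symm
      _ = ξ := hwξ
  rw [GenContFract.compExactValue] at hcor
  rw [if_neg hfr0] at hcor
  simp only [nextConts, nextNum, nextDen, hfrinv, hN1] at hcor
  -- rational previous continuants
  obtain ⟨⟨pa, pb⟩, hpab⟩ := exists_gcf_pair_rat_eq_of_nth_contsAux ξ (n * L - 1)
  have hpaE : ((GenContFract.of ξ).contsAux (n * L - 1)).a = ((pa : ℚ) : ℝ) := by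
    rw [hpab]; rfl
  have hpbE : ((GenContFract.of ξ).contsAux (n * L - 1)).b = ((pb : ℚ) : ℝ) := by
    rw [hpab]; rfl
  have hpb0 : (0 : ℝ) ≤ ((pb : ℚ) : ℝ) := by
    rw [← hpbE]; exact (h7 (n * L - 1)).1.1
  have hξpos : (0 : ℝ) < ξ := by linarith
  rw [hpaE, hpbE, ← hpA, ← hqB] at hcor
  have hden : (0 : ℝ) < ξ * (q : ℝ) + 1 * ((pb : ℚ) : ℝ) := by
    nlinarith
  rw [eq_div_iff (ne_of_gt hden)] at hcor
  -- hcor : ξ * A + 1 * pA = ξ * (ξ * B + 1 * pB)  (or reversed)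
  have hmain : ξ * ((t : ℝ) * (q : ℝ) + ((pb : ℚ) : ℝ) - (p : ℝ))
      = ((pa : ℚ) : ℝ) - (u : ℝ) * (q : ℝ) := by
    linear_combination hcor - (q : ℝ) * hξ2
  -- coefficient must vanish by irrationality
  have hc0 : ((t : ℚ) * (q : ℚ) + pb - (p : ℚ)) = 0 := by
    by_contra hc
    have hcR : (((t : ℚ) * (q : ℚ) + pb - (p : ℚ) : ℚ) : ℝ)
        = (t : ℝ) * (q : ℝ) + ((pb : ℚ) : ℝ) - (p : ℝ) := by push_cast; ring
    have hcR0 : (((t : ℚ) * (q : ℚ) + pb - (p : ℚ) : ℚ) : ℝ) ≠ 0 := by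
      exact_mod_cast hc
    apply h3 ((pa - (u : ℚ) * (q : ℚ)) / ((t : ℚ) * (q : ℚ) + pb - (p : ℚ)))
    rw [Rat.cast_div]
    rw [eq_div_iff hcR0, hcR]
    rw [hmain]
    push_cast
    ring
  have hd0 : ((pa : ℚ) : ℝ) = (u : ℝ) * (q : ℝ) := by
    have hcR : (t : ℝ) * (q : ℝ) + ((pb : ℚ) : ℝ) - (p : ℝ) = 0 := by
      have := congrArg (fun x : ℚ => (x : ℝ)) hc0
      push_cast at this
      linarith
    rw [hcR, mul_zero] at hmain
    linarith
  have hpbv : ((pb : ℚ) : ℝ) = (p : ℝ) - (t : ℝ) * (q : ℝ) := by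
    have := congrArg (fun x : ℚ => (x : ℝ)) hc0
    push_cast at this
    linarith
  -- determinant
  have hdet : ((GenContFract.of ξ).contsAux (n * L - 1)).a *
        ((GenContFract.of ξ).contsAux (n * L)).b -
      ((GenContFract.of ξ).contsAux (n * L - 1)).b *
        ((GenContFract.of ξ).contsAux (n * L)).a = (-1 : ℝ) ^ (n * L - 1) := by
    have hgen : ∀ k : ℕ, ((GenContFract.of ξ).contsAux k).a *
          ((GenContFract.of ξ).contsAux (k + 1)).b -
        ((GenContFract.of ξ).contsAux k).b *
          ((GenContFract.of ξ).contsAux (k + 1)).a = (-1 : ℝ) ^ k := by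
      intro k
      cases k with
      | zero => simp [GenContFract.contsAux]
      | succ m =>
        have hd := SimpContFract.determinant (s := SimpContFract.of ξ) (n := m) (h2 m)
        simp only [num_eq_conts_a, den_eq_conts_b, nth_cont_eq_succ_nth_contAux] at hd
        exact hd
    have hd := hgen (n * L - 1)
    rw [hN1] at hd
    exact hd
  rw [hpaE, hpbE, ← hpA, ← hqB, hd0, hpbv] at hdet
  -- hdet : u*q*q - (p - t*q)*p = (-1)^(n*L-1)
  have hfin : ((p ^ 2 - t * p * q - u * q ^ 2 : ℤ) : ℝ) = -(-1 : ℝ) ^ (n * L - 1) := by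
    push_cast
    linear_combination -hdet
  refine ⟨hq0, hmid, ?_⟩
  rcases Nat.even_or_odd (n * L - 1) with he | ho
  · right
    have : ((p ^ 2 - t * p * q - u * q ^ 2 : ℤ) : ℝ) = -1 := by
      rw [hfin, he.neg_one_pow]
    exact_mod_cast this
  · left
    have : ((p ^ 2 - t * p * q - u * q ^ 2 : ℤ) : ℝ) = 1 := by
      rw [hfin, ho.neg_one_pow]; ring
    exact_mod_cast this
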